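/- There exists a 7-progression-free subset S of F_7^3 with |S| ≥ 225 (i.e., r_7(F_7^3) ≥ 225). -/
import Mathlib

def mask : ℕ := 87768775435273207963849864868679463834401060940581719300459475321510444750448872698891951152047832813

def mem (n : ℕ) : Bool := (mask >>> n) % 2 == 1

def lineOK (d0 d1 d2 a0 a1 a2 : ℕ) : Bool :=
  (List.range 7).any fun i =>
    !(mem (((a0 + i * d0) % 7) * 49 + ((a1 + i * d1) % 7) * 7 + (a2 + i * d2) % 7))

def normal (d0 d1 d2 : ℕ) : Bool :=
  d0 == 1 || (d0 == 0 && d1 == 1) || (d0 == 0 && d1 == 0 && d2 == 1)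

def check : Bool :=
  (List.range 7).all fun d0 => (List.range 7).all fun d1 => (List.range 7).all fun d2 =>
    !(normal d0 d1 d2) ||
    ((List.range 7).all fun a0 => (List.range 7).all fun a1 => (List.range 7).all fun a2 =>
      lineOK d0 d1 d2 a0 a1 a2)

instance fact7 : Fact (Nat.Prime 7) := ⟨by norm_num⟩

def Sgood : Finset (Fin 3 → ZMod 7) :=
  Finset.univ.filter (fun x => mem ((x 0).val * 49 + (x 1).val * 7 + (x 2).val) = true)

set_option maxRecDepth 1000000
set_option maxHeartbeats 4000000

lemma check_true : check = true := by decide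

lemma key (d0 d1 d2 a0 a1 a2 : ℕ) (hd0 : d0 < 7) (hd1 : d1 < 7) (hd2 : d2 < 7)
    (ha0 : a0 < 7) (ha1 : a1 < 7) (ha2 : a2 < 7) (hn : normal d0 d1 d2 = true) :
    ∃ i, i < 7 ∧
      mem (((a0 + i * d0) % 7) * 49 + ((a1 + i * d1) % 7) * 7 + (a2 + i * d2) % 7) = false := by
  have hc := check_true
  unfold check at hc
  simp only [List.all_eq_true, List.mem_range, Bool.or_eq_true, Bool.not_eq_true'] at hc
  rcases hc d0 hd0 d1 hd1 d2 hd2 with h | h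
  · rw [hn] at h; exact absurd h (by simp)
  · have h2 := h a0 ha0 a1 ha1 a2 ha2
    unfold lineOK at h2
    simp only [List.any_eq_true, List.mem_range, Bool.not_eq_true'] at h2
    obtain ⟨i, hi, hmem⟩ := h2
    exact ⟨i, hi, hmem⟩

lemma coord (x y : ZMod 7) (i : ℕ) :
    (x + (i : ZMod 7) * y).val = (x.val + i * y.val) % 7 := by
  have : x + (i : ZMod 7) * y = ((x.val + i * y.val : ℕ) : ZMod 7) := by
    push_cast [ZMod.natCast_val, ZMod.cast_id]
    ring
  rw [this, ZMod.val_natCast]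

lemma scale (a d : Fin 3 → ZMod 7) (c : ZMod 7)
    (h : ∀ i : ℕ, i < 7 → a + (i : ZMod 7) • d ∈ Sgood)
    (i : ℕ) (hi : i < 7) : a + (i : ZMod 7) • (c • d) ∈ Sgood := by
  have h7 : (((i : ZMod 7) * c).val) < 7 := ZMod.val_lt _
  have := h (((i : ZMod 7) * c).val) h7
  have heq : ((((i : ZMod 7) * c).val : ℕ) : ZMod 7) • d = (i : ZMod 7) • (c • d) := by
    rw [smul_smul]
    congr 1
    simp [ZMod.natCast_val, ZMod.cast_id]
  rwa [heq] at this

/-- A subset `S` of `F_p^n` is `k`-progression-free if there are no `a, d` with `d ≠ 0`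
such that `a + i • d ∈ S` for all `i ∈ {0, …, k-1}`. -/
def ProgFree (p n k : ℕ) (S : Finset (Fin n → ZMod p)) : Prop :=
  ¬ ∃ a d : Fin n → ZMod p, d ≠ 0 ∧ ∀ i : ℕ, i < k → a + (i : ZMod p) • d ∈ S

lemma no_line (a d : Fin 3 → ZMod 7) (hd1 : d 0 = 1 ∨ (d 0 = 0 ∧ d 1 = 1) ∨ (d 0 = 0 ∧ d 1 = 0 ∧ d 2 = 1))
    (h : ∀ i : ℕ, i < 7 → a + (i : ZMod 7) • d ∈ Sgood) : False := by
  have hv1 : (1 : ZMod 7).val = 1 := rfl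
  have hn : normal (d 0).val (d 1).val (d 2).val = true := by
    rcases hd1 with h1 | ⟨h1, h2⟩ | ⟨h1, h2, h3⟩ <;> simp [normal, h1, hv1, *]
  obtain ⟨i, hi, hmem⟩ := key (d 0).val (d 1).val (d 2).val (a 0).val (a 1).val (a 2).val
    (ZMod.val_lt _) (ZMod.val_lt _) (ZMod.val_lt _) (ZMod.val_lt _) (ZMod.val_lt _)
    (ZMod.val_lt _) hn
  have hin := h i hi
  simp only [Sgood, Finset.mem_filter, Finset.mem_univ, true_and] at hin
  have e0 : (a + (i : ZMod 7) • d) 0 = a 0 + (i : ZMod 7) * d 0 := by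
    simp [Pi.add_apply, Pi.smul_apply, smul_eq_mul]
  have e1 : (a + (i : ZMod 7) • d) 1 = a 1 + (i : ZMod 7) * d 1 := by
    simp [Pi.add_apply, Pi.smul_apply, smul_eq_mul]
  have e2 : (a + (i : ZMod 7) • d) 2 = a 2 + (i : ZMod 7) * d 2 := by
    simp [Pi.add_apply, Pi.smul_apply, smul_eq_mul]
  rw [e0, e1, e2, coord, coord, coord, hmem] at hin
  exact Bool.false_ne_true hin

theorem stmt_2 :
    ∃ S : Finset (Fin 3 → ZMod 7), ProgFree 7 3 7 S ∧ 225 ≤ S.card := by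
  refine ⟨Sgood, ?_, ?_⟩
  · rintro ⟨a, d, hd, h⟩
    by_cases h0 : d 0 = 0
    · by_cases h1 : d 1 = 0
      · have h2 : d 2 ≠ 0 := by
          intro h2
          exact hd (funext fun j => by fin_cases j <;> assumption)
        refine no_line a ((d 2)⁻¹ • d) ?_ (scale a d ((d 2)⁻¹) h)
        right; right
        exact ⟨by simp [Pi.smul_apply, smul_eq_mul, h0],
          by simp [Pi.smul_apply, smul_eq_mul, h1],
          by simp [Pi.smul_apply, smul_eq_mul, inv_mul_cancel₀ (show d 2 ≠ 0 from h2)]⟩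
      · refine no_line a ((d 1)⁻¹ • d) ?_ (scale a d ((d 1)⁻¹) h)
        right; left
        exact ⟨by simp [Pi.smul_apply, smul_eq_mul, h0],
          by simp [Pi.smul_apply, smul_eq_mul, inv_mul_cancel₀ (show d 1 ≠ 0 from h1)]⟩
    · refine no_line a ((d 0)⁻¹ • d) ?_ (scale a d ((d 0)⁻¹) h)
      left
      simp [Pi.smul_apply, smul_eq_mul, inv_mul_cancel₀ (show d 0 ≠ 0 from h0)]
  · have : Sgood.card = 225 := by decide
    omega
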